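/- Let n be an odd prime with n ≥ 3, let N be an even positive integer, and suppose there are k ≥ 2 pairwise distinct pairs (x_1,y_1), ..., (x_k,y_k) of positive integers with x_i < y_i and x_i^n + y_i^n = N for every i. Then, as real numbers, N ≥ 2 * (2*n / (2 - 2^(1/n)))^n * (k-1)^n. -/

import Mathlib

open Finset

lemma step_pow {n : ℕ} (hn : 2 ≤ n) {m m' : ℕ} (h : m < m') :
    (m+1)^n + m'^n < m^n + (m'+1)^n := by
  have expand : ∀ a : ℕ, (a+1)^n = (∑ i ∈ range n, a^i * n.choose i) + a^n := by
    intro a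
    rw [add_pow a 1 n, Finset.sum_range_succ]
    simp [Nat.choose_self]
  rw [expand m, expand m']
  have key : (∑ i ∈ range n, m^i * n.choose i) < ∑ i ∈ range n, m'^i * n.choose i := by
    apply Finset.sum_lt_sum
    · intro i _
      exact Nat.mul_le_mul_right _ (Nat.pow_le_pow_left h.le i)
    · refine ⟨1, Finset.mem_range.mpr (by omega), ?_⟩
      simp only [pow_one]
      have : 0 < n.choose 1 := by simp [Nat.choose_one_right]; omega
      exact (Nat.mul_lt_mul_right this).mpr h
  omega

lemma convex_pow {n : ℕ} (hn : 2 ≤ n) : ∀ e : ℕ, 1 ≤ e → ∀ a d : ℕ, a < d →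
    (a+e)^n + d^n < a^n + (d+e)^n := by
  intro e
  induction e with
  | zero => omega
  | succ e ih =>
    intro _ a d had
    rcases Nat.eq_zero_or_pos e with rfl | he
    · simpa using step_pow hn had
    · have h1 := ih he a d had
      have h2 := step_pow hn (show a + e < d + e by omega)
      have e1 : a + (e+1) = (a + e) + 1 := by omega
      have e2 : d + (e+1) = (d + e) + 1 := by omega
      rw [e1, e2]
      omega

lemma zmod2_sq : ∀ a : ZMod 2, a * a = a := by decide

lemma zmod2_pow (a : ZMod 2) : ∀ n : ℕ, 1 ≤ n → a ^ n = a := by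
  intro n
  induction n with
  | zero => omega
  | succ m ih =>
    intro _
    rcases Nat.eq_zero_or_pos m with rfl | hm
    · simp
    · rw [pow_succ, ih hm]
      exact zmod2_sq a

theorem taxicab_lower_bound (n : ℕ) (hp : n.Prime) (hodd : Odd n) (hn : 3 ≤ n)
    (N : ℕ) (hNpos : 0 < N) (hNeven : 2 ∣ N)
    (k : ℕ) (hk : 2 ≤ k) (x y : Fin k → ℕ)
    (hxpos : ∀ i, 0 < x i) (hxy : ∀ i, x i < y i)
    (hrep : ∀ i, (x i) ^ n + (y i) ^ n = N)
    (hdist : Function.Injective (fun i => (x i, y i))) :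
    (N : ℝ) ≥ 2 * (2 * n / (2 - (2 : ℝ) ^ ((1 : ℝ) / n))) ^ n * ((k : ℝ) - 1) ^ n := by
  have hn2 : 2 ≤ n := by omega
  haveI : Fact n.Prime := ⟨hp⟩
  set s : Fin k → ℕ := fun i => x i + y i with hs
  -- key : crossing is impossible
  have key : ∀ i j : Fin k, s i = s j → x i < x j → False := by
    intro i j hsij hxij
    have hyj : x j < y j := hxy j
    have hxiyj : x i < y j := by omega
    have hsum : x i + y i = x j + y j := hsij
    have hyij : y j < y i := by omega
    have he : 1 ≤ x j - x i := by omega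
    have := convex_pow hn2 (x j - x i) he (x i) (y j) hxiyj
    have e1 : x i + (x j - x i) = x j := by omega
    have e2 : y j + (x j - x i) = y i := by omega
    rw [e1, e2] at this
    have h1 := hrep i
    have h2 := hrep j
    omega
  have hsinj : Function.Injective s := by
    intro i j hij
    rcases lt_trichotomy (x i) (x j) with h | h | h
    · exact absurd (key i j hij h) (by simp)
    · have hy : y i = y j := by
        have h1 := hrep i
        have h2 := hrep j
        have hyp : (y i)^n = (y j)^n := by rw [h] at h1; omega
        exact Nat.pow_left_injective (by omega) hyp
      exact hdist (by simp [h, hy])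
    · exact absurd (key j i hij.symm h) (by simp)
  -- congruences
  have mod_n : ∀ i, s i ≡ N [MOD n] := by
    intro i
    rw [← hrep i]
    apply (ZMod.natCast_eq_natCast_iff _ _ n).mp
    simp only [hs]
    push_cast
    rw [ZMod.pow_card, ZMod.pow_card]
  have mod_two : ∀ i, s i ≡ N [MOD 2] := by
    intro i
    rw [← hrep i]
    apply (ZMod.natCast_eq_natCast_iff _ _ 2).mp
    simp only [hs]
    push_cast
    rw [zmod2_pow _ n (by omega), zmod2_pow _ n (by omega)]
  have mod_2n : ∀ i, s i ≡ N [MOD 2*n] := by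
    intro i
    exact (Nat.modEq_and_modEq_iff_modEq_mul (Nat.coprime_two_left.mpr hodd)).mp
      ⟨mod_two i, mod_n i⟩
  -- minimum
  obtain ⟨i₀, -, hmin⟩ := Finset.exists_min_image Finset.univ s
    ⟨⟨0, by omega⟩, Finset.mem_univ _⟩
  have hmin' : ∀ i, s i₀ ≤ s i := fun i => hmin i (Finset.mem_univ i)
  have hdvd : ∀ i, 2*n ∣ s i - s i₀ := by
    intro i
    exact (Nat.modEq_iff_dvd' (hmin' i)).mp ((mod_2n i₀).trans (mod_2n i).symm)
  set g : Fin k → ℕ := fun i => (s i - s i₀) / (2*n) with hg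
  have hgs : ∀ i, s i = s i₀ + 2*n*(g i) := by
    intro i
    have h1 := Nat.mul_div_cancel' (hdvd i)
    have h2 := hmin' i
    simp only [hg]
    omega
  have hginj : Function.Injective g := by
    intro i j hij
    apply hsinj
    rw [hgs i, hgs j, hij]
  -- exists large g
  have hex : ∃ i₁, k - 1 ≤ g i₁ := by
    by_contra hcon
    push_neg at hcon
    have hinj2 : Function.Injective (fun i : Fin k => (⟨g i, hcon i⟩ : Fin (k-1))) := by
      intro i j hij
      apply hginj
      simpa using congrArg Fin.val hij
    have := Fintype.card_le_of_injective _ hinj2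
    simp at this
    omega
  obtain ⟨i₁, hi₁⟩ := hex
  -- bounds
  have hlow : ∀ i, N < (s i) ^ n := by
    intro i
    obtain ⟨m, hm⟩ : ∃ m, n = m + 1 := ⟨n-1, by omega⟩
    have hm2 : m ≠ 0 := by omega
    rw [← hrep i, hm]
    have h1 : x i ^ m < s i ^ m :=
      Nat.pow_lt_pow_left (by have := hxy i; simp only [hs]; omega) hm2
    have h2 : y i ^ m ≤ s i ^ m :=
      Nat.pow_le_pow_left (by simp only [hs]; omega) m
    calc x i ^ (m+1) + y i ^ (m+1) = x i * x i ^ m + y i * y i ^ m := by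
          rw [pow_succ', pow_succ']
    _ < x i * s i ^ m + y i * s i ^ m :=
          add_lt_add_of_lt_of_le (mul_lt_mul_of_pos_left h1 (hxpos i))
            (mul_le_mul_of_nonneg_left h2 (Nat.zero_le _))
    _ = s i ^ (m+1) := by rw [pow_succ']; simp only [hs]; ring
  have hhigh : ∀ i, (s i) ^ n ≤ 2^(n-1) * N := by
    intro i
    rw [← hrep i]
    exact add_pow_le (Nat.zero_le _) (Nat.zero_le _) n
  -- real part
  have hnne : (n:ℝ) ≠ 0 := Nat.cast_ne_zero.mpr (by omega)
  set c : ℝ := (2:ℝ) ^ ((1:ℝ)/(n:ℝ)) with hc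
  have hcn : c ^ n = 2 := by
    rw [hc, ← Real.rpow_natCast ((2:ℝ) ^ ((1:ℝ)/(n:ℝ))) n,
      ← Real.rpow_mul (by norm_num), one_div, inv_mul_cancel₀ hnne, Real.rpow_one]
  have hcpos : 0 < c := Real.rpow_pos_of_pos (by norm_num) _
  have hc2 : c < 2 := by
    have h1 : (1:ℝ)/(n:ℝ) < 1 := by
      rw [div_lt_one (by positivity)]
      exact_mod_cast by omega
    calc c < 2 ^ (1:ℝ) := Real.rpow_lt_rpow_of_exponent_lt (by norm_num) h1
    _ = 2 := Real.rpow_one 2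
  set t : ℝ := (N:ℝ) ^ ((1:ℝ)/(n:ℝ)) with ht
  have htn : t ^ n = N := by
    rw [ht, ← Real.rpow_natCast ((N:ℝ) ^ ((1:ℝ)/(n:ℝ))) n,
      ← Real.rpow_mul (Nat.cast_nonneg N), one_div, inv_mul_cancel₀ hnne, Real.rpow_one]
  have htpos : 0 < t := Real.rpow_pos_of_pos (by exact_mod_cast hNpos) _
  have hA : t < (s i₀ : ℝ) := by
    have h1 : (N:ℝ) < (s i₀ : ℝ)^n := by exact_mod_cast hlow i₀
    rw [← htn] at h1
    exact lt_of_pow_lt_pow_left₀ n (Nat.cast_nonneg _) h1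
  have hB : (s i₁ : ℝ) ≤ (2/c) * t := by
    have h1 : ((s i₁ : ℝ))^n ≤ 2^(n-1) * N := by exact_mod_cast hhigh i₁
    have h2 : ((2/c)*t)^n = 2^(n-1) * (N:ℝ) := by
      rw [mul_pow, div_pow, hcn, htn]
      have h3 : (2:ℝ)^n = 2^(n-1)*2 := by rw [← pow_succ]; congr 1; omega
      rw [h3]
      field_simp
    rw [← h2] at h1
    exact le_of_pow_le_pow_left₀ (by omega) (by positivity) h1
  have hk1 : (1:ℝ) ≤ (k:ℝ) - 1 := by
    have : (2:ℝ) ≤ (k:ℝ) := by exact_mod_cast hk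
    linarith
  have hgap : (s i₀ : ℝ) + 2*(n:ℝ)*((k:ℝ)-1) ≤ (s i₁ : ℝ) := by
    have h1 : s i₀ + 2*n*(k-1) ≤ s i₁ := by
      rw [hgs i₁]
      have := Nat.mul_le_mul_left (2*n) hi₁
      omega
    have h2 : ((s i₀ + 2*n*(k-1) : ℕ) : ℝ) ≤ ((s i₁ : ℕ) : ℝ) := by exact_mod_cast h1
    push_cast [Nat.cast_sub (by omega : 1 ≤ k)] at h2
    linarith
  have h2c : 0 < 2 - c := by linarith
  have hfin : c * (2*(n:ℝ)*((k:ℝ)-1)) / (2-c) < t := by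
    rw [div_lt_iff₀ h2c]
    have h3 : t + 2*(n:ℝ)*((k:ℝ)-1) ≤ (2/c) * t := by linarith
    have h4 : c * (t + 2*(n:ℝ)*((k:ℝ)-1)) ≤ c * ((2/c)*t) := by
      exact mul_le_mul_of_nonneg_left h3 hcpos.le
    have h5 : c * ((2/c)*t) = 2*t := by field_simp
    nlinarith
  have hposL : 0 ≤ c * (2*(n:ℝ)*((k:ℝ)-1)) / (2-c) := by
    apply div_nonneg _ h2c.le
    apply mul_nonneg hcpos.le
    apply mul_nonneg (by positivity)
    linarith
  have hpow := pow_lt_pow_left₀ hfin hposL (by omega : n ≠ 0)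
  rw [htn] at hpow
  have heq : (c * (2*(n:ℝ)*((k:ℝ)-1)) / (2-c))^n
      = 2 * (2 * (n:ℝ) / (2 - c)) ^ n * ((k:ℝ) - 1) ^ n := by
    have hrw : c * (2*(n:ℝ)*((k:ℝ)-1)) / (2-c) = c * ((2*(n:ℝ)/(2-c)) * ((k:ℝ)-1)) := by
      field_simp
    rw [hrw, mul_pow, mul_pow, hcn]
    ring
  rw [heq] at hpow
  exact le_of_lt hpow
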